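/- For all real x and all y ≥ √3/8, 1 + 2·Σ_{n≥1} e^{−2πn²y} ≤ 1.52182, and hence |θ(x+iy)| ≤ 1.52182 where θ is the Jacobi theta function. -/

import Mathlib

set_option maxHeartbeats 1000000

open Real Complex

private lemma aux_term (c y : ℝ) (hc0 : 0 < c) (hc1 : c < 1)
    (hq : Real.exp (-(2 * Real.pi * y)) ≤ c) (n k : ℕ) (hk : k ≤ (n + 1) ^ 2) :
    Real.exp (-2 * Real.pi * ((n : ℝ) + 1) ^ 2 * y) ≤ c ^ k := by
  have heq : Real.exp (-2 * Real.pi * ((n : ℝ) + 1) ^ 2 * y)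
      = Real.exp (-(2 * Real.pi * y)) ^ ((n + 1) ^ 2) := by
    rw [← Real.exp_nat_mul]
    congr 1
    push_cast
    ring
  rw [heq]
  calc Real.exp (-(2 * Real.pi * y)) ^ ((n + 1) ^ 2)
      ≤ c ^ ((n + 1) ^ 2) := pow_le_pow_left₀ (Real.exp_pos _).le hq _
    _ ≤ c ^ k := pow_le_pow_of_le_one hc0.le hc1.le hk

private lemma aux_main (c y : ℝ) (hc0 : 0 < c) (hc1 : c < 1)
    (hq : Real.exp (-(2 * Real.pi * y)) ≤ c) :
    Summable (fun n : ℕ => Real.exp (-2 * Real.pi * ((n : ℝ) + 1) ^ 2 * y)) ∧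
    ∑' n : ℕ, Real.exp (-2 * Real.pi * ((n : ℝ) + 1) ^ 2 * y)
      ≤ c + c ^ 4 + c ^ 9 * (1 - c ^ 6)⁻¹ := by
  set f : ℕ → ℝ := fun n => Real.exp (-2 * Real.pi * ((n : ℝ) + 1) ^ 2 * y) with hf
  have hterm := aux_term c y hc0 hc1 hq
  have hfpos : ∀ n, 0 ≤ f n := fun n => Real.exp_nonneg _
  have hc6 : c ^ 6 < 1 := pow_lt_one₀ hc0.le hc1 (by norm_num)
  have hsum : Summable f := by
    apply Summable.of_nonneg_of_le hfpos (fun n => hterm n (n + 1) (by nlinarith))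
    have := summable_geometric_of_lt_one hc0.le hc1
    simpa [pow_succ'] using this.mul_left c
  have hsum1 : Summable (fun n => f (n + 1)) := (summable_nat_add_iff 1).mpr hsum
  have hsum2 : Summable (fun n => f (n + 2)) := (summable_nat_add_iff 2).mpr hsum
  have hgeom : Summable (fun n : ℕ => c ^ 9 * (c ^ 6) ^ n) :=
    (summable_geometric_of_lt_one (by positivity) hc6).mul_left _
  have htail : ∑' n : ℕ, f (n + 2) ≤ c ^ 9 * (1 - c ^ 6)⁻¹ := by
    have hle : ∀ n : ℕ, f (n + 2) ≤ c ^ 9 * (c ^ 6) ^ n := by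
      intro n
      have h9 : c ^ 9 * (c ^ 6) ^ n = c ^ (6 * n + 9) := by
        rw [← pow_mul, ← pow_add]; ring_nf
      rw [h9]
      exact hterm (n + 2) (6 * n + 9) (by nlinarith)
    calc ∑' n : ℕ, f (n + 2) ≤ ∑' n : ℕ, c ^ 9 * (c ^ 6) ^ n :=
          Summable.tsum_le_tsum hle hsum2 hgeom
      _ = c ^ 9 * (1 - c ^ 6)⁻¹ := by
          rw [tsum_mul_left, tsum_geometric_of_lt_one (by positivity) hc6]
  have hsplit : ∑' n : ℕ, f n = f 0 + (f 1 + ∑' n : ℕ, f (n + 2)) := by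
    rw [Summable.tsum_eq_zero_add hsum, Summable.tsum_eq_zero_add hsum1]
  refine ⟨hsum, ?_⟩
  rw [hsplit]
  have h0 : f 0 ≤ c := by
    have h := hterm 0 1 (by norm_num)
    rwa [pow_one] at h
  have h1 : f 1 ≤ c ^ 4 := hterm 1 4 (by norm_num)
  linarith

theorem stmt_14 (x y : ℝ) (hy : Real.sqrt 3 / 8 ≤ y) :
    1 + 2 * ∑' n : ℕ, Real.exp (-2 * Real.pi * ((n : ℝ) + 1) ^ 2 * y) ≤ 1.52182 ∧
    ‖1 + 2 * ∑' n : ℕ,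
        Complex.exp (2 * Real.pi * Complex.I * ((n : ℂ) + 1) ^ 2 * (x + y * Complex.I))‖
      ≤ 1.52182 := by
  have hs3 : (1.7320508 : ℝ) ≤ Real.sqrt 3 := by
    nlinarith [Real.sq_sqrt (by norm_num : (3:ℝ) ≥ 0), Real.sqrt_nonneg 3]
  have hpi : (3.141592 : ℝ) < Real.pi := Real.pi_gt_d6
  have hy' : (1.360349 : ℝ) ≤ 2 * Real.pi * y := by
    have h1 : 2 * Real.pi * (Real.sqrt 3 / 8) ≤ 2 * Real.pi * y := by
      have : (0:ℝ) < 2 * Real.pi := by positivity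
      nlinarith
    nlinarith [Real.sqrt_nonneg 3]
  have hexp : (1 : ℝ) / 0.25657122 ≤ Real.exp 1.360349 := by
    have h := Real.sum_le_exp_of_nonneg (by norm_num : (0:ℝ) ≤ 1.360349) 18
    refine le_trans ?_ h
    norm_num [Finset.sum_range_succ, Nat.factorial]
  have hq : Real.exp (-(2 * Real.pi * y)) ≤ 0.25657122 := by
    have h1 : Real.exp (-(2 * Real.pi * y)) ≤ Real.exp (-(1.360349 : ℝ)) :=
      Real.exp_le_exp.mpr (by linarith)
    have h2 : Real.exp (-(1.360349 : ℝ)) ≤ 0.25657122 := by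
      rw [Real.exp_neg]
      rw [inv_le_comm₀ (Real.exp_pos _) (by norm_num), ← one_div]
      exact hexp
    exact h1.trans h2
  obtain ⟨hsum, hbound⟩ := aux_main 0.25657122 y (by norm_num) (by norm_num) hq
  have hnum : (0.25657122 : ℝ) + 0.25657122 ^ 4
      + 0.25657122 ^ 9 * (1 - 0.25657122 ^ 6)⁻¹ ≤ 0.26091 := by norm_num
  have hfinal : 1 + 2 * ∑' n : ℕ, Real.exp (-2 * Real.pi * ((n : ℝ) + 1) ^ 2 * y)
      ≤ 1.52182 := by
    have := hbound.trans hnum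
    linarith
  refine ⟨hfinal, ?_⟩
  set g : ℕ → ℂ := fun n =>
    Complex.exp (2 * Real.pi * Complex.I * ((n : ℂ) + 1) ^ 2 * (x + y * Complex.I)) with hg
  have habs : ∀ n, ‖g n‖ = Real.exp (-2 * Real.pi * ((n : ℝ) + 1) ^ 2 * y) := by
    intro n
    show ‖Complex.exp (2 * (Real.pi : ℂ) * Complex.I * ((n:ℂ) + 1) ^ 2
        * ((x:ℂ) + (y:ℂ) * Complex.I))‖ = _
    have hz : 2 * (Real.pi : ℂ) * Complex.I * ((n:ℂ) + 1) ^ 2 * ((x:ℂ) + (y:ℂ) * Complex.I)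
        = Complex.I * ((2 * Real.pi * ((n:ℝ) + 1) ^ 2 * x : ℝ) : ℂ)
          + ((-2 * Real.pi * ((n:ℝ) + 1) ^ 2 * y : ℝ) : ℂ) := by
      push_cast
      ring_nf
      rw [Complex.I_sq]
      ring
    rw [hz, Complex.norm_exp]
    congr 1
    simp only [Complex.add_re, Complex.mul_re, Complex.I_re, Complex.I_im,
      Complex.ofReal_re, Complex.ofReal_im]
    ring
  have hsumg : Summable (fun n => ‖g n‖) := by
    simpa only [habs] using hsum
  calc ‖1 + 2 * ∑' n : ℕ, g n‖
      ≤ ‖(1 : ℂ)‖ + ‖2 * ∑' n : ℕ, g n‖ := norm_add_le _ _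
    _ = 1 + 2 * ‖∑' n : ℕ, g n‖ := by
        rw [norm_mul]; simp
    _ ≤ 1 + 2 * ∑' n : ℕ, Real.exp (-2 * Real.pi * ((n : ℝ) + 1) ^ 2 * y) := by
        have := norm_tsum_le_tsum_norm hsumg
        simp only [habs] at this
        linarith
    _ ≤ 1.52182 := hfinal
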